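/- Let V be an elementary unregularized vector field on the scale (H_k), and suppose w ∈ C⁰(I_T,H_1) ∩ C¹(I_T,H_0) is a solution of ∂_s w = V(w) such that there exists a constant κ with ‖∂_s w‖_{L²(I_T,H_0)} ≤ κ. Then for every 0 < T' < T there exists a constant c = c(κ,T') such that ‖w‖_{C⁰(I_{T'},H_1) ∩ C¹(I_{T'},H_0)} ≤ c. -/

import Mathlib

open MeasureTheory Set

namespace NLGF

variable {X : Type*} [AddCommGroup X] [Module ℝ X]

/-- A *moving frame* on the scale `(Mem, nrm)` (where `Mem k`/`nrm k` are membership in and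
norm of the `k`-th level `H_k` of the scale): a family of isomorphisms `Φ(x) : H_0 → H_0`,
`x ∈ H_1`, together with derivatives `DΦ(x) : H_0 × H_0 → H_0`, satisfying the
properties (Φ1)–(Φ6) of Albers–Frauenfelder–Schlenk. -/
structure MovingFrame (Mem : ℤ → X → Prop) (nrm : ℤ → X → ℝ) : Type _ where
  Φ : X → X → X
  Φinv : X → X → X
  DΦ : X → X → X → X
  -- `Φ x`, `Φinv x` are linear on `H_0`, `DΦ x` is bilinear on `H_0 × H_0`
  add_Φ : ∀ x v w, Mem 1 x → Mem 0 v → Mem 0 w → Φ x (v + w) = Φ x v + Φ x w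
  smul_Φ : ∀ x (a : ℝ) v, Mem 1 x → Mem 0 v → Φ x (a • v) = a • Φ x v
  add_Φinv : ∀ x v w, Mem 1 x → Mem 0 v → Mem 0 w → Φinv x (v + w) = Φinv x v + Φinv x w
  smul_Φinv : ∀ x (a : ℝ) v, Mem 1 x → Mem 0 v → Φinv x (a • v) = a • Φinv x v
  add_DΦ_right : ∀ x h v w, Mem 1 x → Mem 0 h → Mem 0 v → Mem 0 w →
    DΦ x h (v + w) = DΦ x h v + DΦ x h w
  smul_DΦ_right : ∀ x h (a : ℝ) v, Mem 1 x → Mem 0 h → Mem 0 v →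
    DΦ x h (a • v) = a • DΦ x h v
  add_DΦ_left : ∀ x h g v, Mem 1 x → Mem 0 h → Mem 0 g → Mem 0 v →
    DΦ x (h + g) v = DΦ x h v + DΦ x g v
  smul_DΦ_left : ∀ x (a : ℝ) h v, Mem 1 x → Mem 0 h → Mem 0 v →
    DΦ x (a • h) v = a • DΦ x h v
  mem_Φ : ∀ x v, Mem 1 x → Mem 0 v → Mem 0 (Φ x v)
  mem_Φinv : ∀ x v, Mem 1 x → Mem 0 v → Mem 0 (Φinv x v)
  mem_DΦ : ∀ x h v, Mem 1 x → Mem 0 h → Mem 0 v → Mem 0 (DΦ x h v)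
  -- (Φ1): `Φ(x) : H_0 → H_0` is an isomorphism
  Φ_left_inv : ∀ x v, Mem 1 x → Mem 0 v → Φinv x (Φ x v) = v
  Φ_right_inv : ∀ x v, Mem 1 x → Mem 0 v → Φ x (Φinv x v) = v
  bounded_Φ : ∀ x, Mem 1 x → ∃ C > 0, ∀ v, Mem 0 v →
    nrm 0 (Φ x v) ≤ C * nrm 0 v ∧ nrm 0 (Φinv x v) ≤ C * nrm 0 v
  bounded_DΦ : ∀ x, Mem 1 x → ∃ C > 0, ∀ h v, Mem 0 h → Mem 0 v →
    nrm 0 (DΦ x h v) ≤ C * (nrm 0 h * nrm 0 v)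
  -- (Φ2): `(x,v) ↦ Φ(x)v` is continuous `H_1 × H_0 → H_0`
  cont_Φ : ∀ x v, Mem 1 x → Mem 0 v → ∀ ε > 0, ∃ δ > 0, ∀ x' v', Mem 1 x' → Mem 0 v' →
    nrm 1 (x' - x) < δ → nrm 0 (v' - v) < δ → nrm 0 (Φ x' v' - Φ x v) < ε
  -- (Φ3): `DΦ(x)` is the derivative of `x ↦ Φ(x)v`
  hasDeriv_Φ : ∀ x v, Mem 1 x → Mem 0 v → ∀ ε > 0, ∃ δ > 0, ∀ h, Mem 1 h → nrm 1 h < δ →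
    nrm 0 (Φ (x + h) v - Φ x v - DΦ x h v) ≤ ε * nrm 1 h
  -- (Φ4): `(x,h,v) ↦ DΦ(x)(h,v)` is continuous `H_1 × H_0 × H_0 → H_0`
  cont_DΦ : ∀ x h v, Mem 1 x → Mem 0 h → Mem 0 v → ∀ ε > 0, ∃ δ > 0,
    ∀ x' h' v', Mem 1 x' → Mem 0 h' → Mem 0 v' →
      nrm 1 (x' - x) < δ → nrm 0 (h' - h) < δ → nrm 0 (v' - v) < δ →
      nrm 0 (DΦ x' h' v' - DΦ x h v) < ε
  -- (Φ5): `Φ(x)` restricts to an isomorphism of `H_1`, continuously in `(x,v) ∈ H_1 × H_1`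
  mem_Φ_one : ∀ x v, Mem 1 x → Mem 1 v → Mem 1 (Φ x v)
  mem_Φinv_one : ∀ x v, Mem 1 x → Mem 1 v → Mem 1 (Φinv x v)
  cont_Φ_one : ∀ x v, Mem 1 x → Mem 1 v → ∀ ε > 0, ∃ δ > 0, ∀ x' v', Mem 1 x' → Mem 1 v' →
    nrm 1 (x' - x) < δ → nrm 1 (v' - v) < δ →
    nrm 1 (Φ x' v' - Φ x v) < ε ∧ nrm 1 (Φinv x' v' - Φinv x v) < ε
  -- (Φ6): uniform bounds on balls of `H_1`
  uniform_bound : ∀ κ > 0, ∃ c0 > 0, ∀ x, Mem 1 x → nrm 1 x ≤ κ →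
    (∀ v, Mem 0 v → nrm 0 (Φ x v) ≤ c0 * nrm 0 v ∧ nrm 0 (Φinv x v) ≤ c0 * nrm 0 v) ∧
    (∀ v, Mem 1 v → nrm 1 (Φ x v) ≤ c0 * nrm 1 v ∧ nrm 1 (Φinv x v) ≤ c0 * nrm 1 v) ∧
    (∀ h v, Mem 0 h → Mem 0 v → nrm 0 (DΦ x h v) ≤ c0 * (nrm 0 h * nrm 0 v))

/-- An *unregularized vector field* on the scale `(Mem, nrm)` with fundamental operator `F`:
a map `V ∈ C⁰(H_1,H_0) ∩ C⁰(H_2,H_1)`, differentiable as a map `H_1 → H_0`, satisfying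
properties (V1)–(V3) of Albers–Frauenfelder–Schlenk with respect to a moving frame `Φ`. -/
structure UVF (Mem : ℤ → X → Prop) (nrm : ℤ → X → ℝ) (F : X → X) : Type _ where
  V : X → X
  DV : X → X → X
  frame : MovingFrame Mem nrm
  P : X → X → X
  -- `V ∈ C⁰(H_1,H_0) ∩ C⁰(H_2,H_1)`
  mem_V_one : ∀ x, Mem 1 x → Mem 0 (V x)
  mem_V_two : ∀ x, Mem 2 x → Mem 1 (V x)
  cont_V_one : ∀ x, Mem 1 x → ∀ ε > 0, ∃ δ > 0, ∀ x', Mem 1 x' →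
    nrm 1 (x' - x) < δ → nrm 0 (V x' - V x) < ε
  cont_V_two : ∀ x, Mem 2 x → ∀ ε > 0, ∃ δ > 0, ∀ x', Mem 2 x' →
    nrm 2 (x' - x) < δ → nrm 1 (V x' - V x) < ε
  -- `V : H_1 → H_0` is differentiable with differential `DV(x) : H_1 → H_0`
  add_DV : ∀ x h g, Mem 1 x → Mem 1 h → Mem 1 g → DV x (h + g) = DV x h + DV x g
  smul_DV : ∀ x (a : ℝ) h, Mem 1 x → Mem 1 h → DV x (a • h) = a • DV x h
  mem_DV : ∀ x h, Mem 1 x → Mem 1 h → Mem 0 (DV x h)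
  hasDeriv_V : ∀ x, Mem 1 x → ∀ ε > 0, ∃ δ > 0, ∀ h, Mem 1 h → nrm 1 h < δ →
    nrm 0 (V (x + h) - V x - DV x h) ≤ ε * nrm 1 h
  -- (V1): `(x,x̂) ↦ DV(x)x̂` is continuous `H_1 × H_1 → H_0`
  cont_DV : ∀ x h, Mem 1 x → Mem 1 h → ∀ ε > 0, ∃ δ > 0, ∀ x' h', Mem 1 x' → Mem 1 h' →
    nrm 1 (x' - x) < δ → nrm 1 (h' - h) < δ → nrm 0 (DV x' h' - DV x h) < ε
  -- (V2): `Φ(x) DV(x) Φ(x)⁻¹ - F : H_1 → H_0` extends to a continuous linear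
  -- operator `P(x) : H_0 → H_0`, with `(x,x̂) ↦ P(x)x̂` continuous `H_1 × H_0 → H_0`
  add_P : ∀ x v w, Mem 1 x → Mem 0 v → Mem 0 w → P x (v + w) = P x v + P x w
  smul_P : ∀ x (a : ℝ) v, Mem 1 x → Mem 0 v → P x (a • v) = a • P x v
  mem_P : ∀ x v, Mem 1 x → Mem 0 v → Mem 0 (P x v)
  bounded_P : ∀ x, Mem 1 x → ∃ C > 0, ∀ v, Mem 0 v → nrm 0 (P x v) ≤ C * nrm 0 v
  extends_P : ∀ x h, Mem 1 x → Mem 1 h → P x h = frame.Φ x (DV x (frame.Φinv x h)) - F h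
  cont_P : ∀ x v, Mem 1 x → Mem 0 v → ∀ ε > 0, ∃ δ > 0, ∀ x' v', Mem 1 x' → Mem 0 v' →
    nrm 1 (x' - x) < δ → nrm 0 (v' - v) < δ → nrm 0 (P x' v' - P x v) < ε
  -- (V3): bounds on balls of `H_1`
  bound_V3 : ∀ κ > 0, ∃ c1 > 0,
    (∀ x, Mem 1 x → nrm 1 x ≤ κ → ∀ v, Mem 0 v → nrm 0 (P x v) ≤ c1 * nrm 0 v) ∧
    (∀ x, Mem 2 x → nrm 1 x ≤ κ → nrm 2 x ≤ c1 * (nrm 1 (V x) + 1))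

/-- An unregularized vector field is *elementary with constant `c`* if its moving frame is
the identity and (V3') holds with the uniform constant `c`. -/
def UVF.ElementaryWith {Mem : ℤ → X → Prop} {nrm : ℤ → X → ℝ} {F : X → X}
    (W : UVF Mem nrm F) (c : ℝ) : Prop :=
  (∀ x v, W.frame.Φ x v = v) ∧ (∀ x v, W.frame.Φinv x v = v) ∧
  (∀ x h v, W.frame.DΦ x h v = 0) ∧ 0 < c ∧
  (∀ x, Mem 1 x →
    (∀ v, Mem 0 v → nrm 0 (W.P x v) ≤ c * nrm 0 v) ∧ nrm 1 x ≤ c * (nrm 0 (W.V x) + 1)) ∧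
  (∀ x, Mem 2 x → nrm 2 x ≤ c * (nrm 1 (W.V x) + nrm 1 x + 1))

/-- An *elementary* unregularized vector field: the moving frame in (V2) can be chosen to be
the identity, and the strengthened uniform bound (V3') holds. -/
def UVF.Elementary {Mem : ℤ → X → Prop} {nrm : ℤ → X → ℝ} {F : X → X}
    (W : UVF Mem nrm F) : Prop :=
  ∃ c : ℝ, W.ElementaryWith c

/-- `w ∈ C⁰(I, H_k)` : the curve `w` takes values in `H_k` and is continuous on `I`
with respect to the `H_k`-norm. -/
def ContCurveOn (Mem : ℤ → X → Prop) (nrm : ℤ → X → ℝ) (k : ℤ) (I : Set ℝ) (w : ℝ → X) :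
    Prop :=
  (∀ s ∈ I, Mem k (w s)) ∧
  ∀ s ∈ I, ∀ ε > 0, ∃ δ > 0, ∀ s' ∈ I, |s' - s| < δ → nrm k (w s' - w s) < ε

/-- The curve `w` is differentiable on `I` in the `H_k`-norm, with derivative `dw`. -/
def HasDerivCurveOn (nrm : ℤ → X → ℝ) (k : ℤ) (I : Set ℝ) (w dw : ℝ → X) : Prop :=
  ∀ s ∈ I, ∀ ε > 0, ∃ δ > 0, ∀ s' ∈ I, s' ≠ s → |s' - s| < δ →
    nrm k ((s' - s)⁻¹ • (w s' - w s) - dw s) < ε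

/-- `w ∈ C⁰(I_T, H_1) ∩ C¹(I_T, H_0)` is a solution of the unregularized gradient flow
equation `∂ₛ w = V(w)` on `I_T = (-T,T)`. -/
def IsGradSol (Mem : ℤ → X → Prop) (nrm : ℤ → X → ℝ) (Vf : X → X) (T : ℝ) (w : ℝ → X) :
    Prop :=
  ContCurveOn Mem nrm 1 (Ioo (-T) T) w ∧
  HasDerivCurveOn nrm 0 (Ioo (-T) T) w (fun s => Vf (w s)) ∧
  ContCurveOn Mem nrm 0 (Ioo (-T) T) (fun s => Vf (w s))

end NLGF

open scoped ENNReal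

namespace NLGF

/-- `f : ℕ → (0,∞)` is monotone increasing and unbounded. -/
def GoodWeight (f : ℕ → ℝ) : Prop :=
  (∀ ν, 0 < f ν) ∧ Monotone f ∧ ∀ c : ℝ, ∃ ν, c < f ν

/-- `ζ : ℕ → {±1}`. -/
def Signs (ζ : ℕ → ℝ) : Prop := ∀ ν, ζ ν = 1 ∨ ζ ν = -1

/-- Membership in `H_k = ℓ²_{f^k}` : `∑ f(ν)^k x_ν² < ∞`. -/
def sMem (f : ℕ → ℝ) (k : ℤ) (x : ℕ → ℝ) : Prop :=
  Summable fun ν => f ν ^ k * x ν ^ 2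

/-- The norm of `H_k = ℓ²_{f^k}`. -/
noncomputable def snrm (f : ℕ → ℝ) (k : ℤ) (x : ℕ → ℝ) : ℝ :=
  Real.sqrt (∑' ν, f ν ^ k * x ν ^ 2)

/-- The fundamental operator `(F x)_ν = ζ(ν) √(f(ν)) x_ν`, an isometry `H_{k+1} → H_k`. -/
noncomputable def sF (f ζ : ℕ → ℝ) (x : ℕ → ℝ) : ℕ → ℝ :=
  fun ν => ζ ν * Real.sqrt (f ν) * x ν

/-- The squared `L²(I, H_k)`-norm of a curve `u`, as an extended real. -/
noncomputable def eL2 (f : ℕ → ℝ) (k : ℤ) (I : Set ℝ) (u : ℝ → ℕ → ℝ) : ℝ≥0∞ :=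
  ∫⁻ s in I, ENNReal.ofReal ((snrm f k (u s)) ^ 2)

/-- `g` is a weak derivative of `u` on the interval `I` (componentwise, against smooth
compactly supported test functions). -/
def WeakDerivOn (I : Set ℝ) (u g : ℝ → ℕ → ℝ) : Prop :=
  ∀ (ν : ℕ) (φ : ℝ → ℝ), ContDiff ℝ (⊤ : ℕ∞) φ → HasCompactSupport φ → tsupport φ ⊆ I →
    ∫ s in I, u s ν * deriv φ s = - ∫ s in I, g s ν * φ s

end NLGF

namespace NLGF

section basics
variable {f : ℕ → ℝ} {k : ℤ} {x y : ℕ → ℝ}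

lemma sMem_zero_iff : sMem f 0 x ↔ Summable fun ν => x ν ^ 2 := by
  unfold sMem; simp

lemma snrm_zero_eq : snrm f 0 x = Real.sqrt (∑' ν, x ν ^ 2) := by
  unfold snrm; simp

lemma snrm_one_eq : snrm f 1 x = Real.sqrt (∑' ν, f ν * x ν ^ 2) := by
  unfold snrm; simp

lemma sMem_one_iff : sMem f 1 x ↔ Summable fun ν => f ν * x ν ^ 2 := by
  unfold sMem; simp

lemma snrm_nonneg : 0 ≤ snrm f k x := Real.sqrt_nonneg _

lemma sMem.add (hf : GoodWeight f) (hx : sMem f k x) (hy : sMem f k y) :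
    sMem f k (x + y) := by
  refine Summable.of_nonneg_of_le (fun ν => ?_) (fun ν => ?_)
    ((Summable.add hx hy).mul_left 2)
  · have := (hf.1 ν); positivity
  · have h1 : 0 < f ν ^ k := zpow_pos (hf.1 ν) k
    have h2 : (x ν + y ν) ^ 2 ≤ 2 * (x ν ^ 2 + y ν ^ 2) := by nlinarith [sq_nonneg (x ν - y ν)]
    calc f ν ^ k * ((x + y) ν) ^ 2 = f ν ^ k * (x ν + y ν) ^ 2 := rfl
      _ ≤ f ν ^ k * (2 * (x ν ^ 2 + y ν ^ 2)) := by nlinarith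
      _ = 2 * (f ν ^ k * x ν ^ 2 + f ν ^ k * y ν ^ 2) := by ring

lemma sMem.smul (hx : sMem f k x) (a : ℝ) : sMem f k (a • x) := by
  have : (fun ν => f ν ^ k * ((a • x) ν) ^ 2) = fun ν => a ^ 2 * (f ν ^ k * x ν ^ 2) := by
    funext ν; simp [smul_eq_mul]; ring
  unfold sMem; rw [this]; exact hx.mul_left _

lemma sMem.neg (hx : sMem f k x) : sMem f k (-x) := by
  have h := hx.smul (-1); simpa using h

lemma sMem.sub (hf : GoodWeight f) (hx : sMem f k x) (hy : sMem f k y) :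
    sMem f k (x - y) := by
  have := sMem.add hf hx hy.neg; simpa [sub_eq_add_neg] using this

lemma snrm_smul (a : ℝ) : snrm f k (a • x) = |a| * snrm f k x := by
  unfold snrm
  have : (fun ν => f ν ^ k * ((a • x) ν) ^ 2) = fun ν => a ^ 2 * (f ν ^ k * x ν ^ 2) := by
    funext ν; simp [smul_eq_mul]; ring
  rw [this, tsum_mul_left, Real.sqrt_mul (sq_nonneg a), Real.sqrt_sq_eq_abs]

lemma snrm_zero' : snrm f k 0 = 0 := by
  unfold snrm; simp

lemma sq_snrm (hf : GoodWeight f) : snrm f k x ^ 2 = ∑' ν, f ν ^ k * x ν ^ 2 := by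
  unfold snrm
  exact Real.sq_sqrt (tsum_nonneg fun ν => by have := hf.1 ν; positivity)

lemma sq_snrm0 : snrm f 0 x ^ 2 = ∑' ν, x ν ^ 2 := by
  rw [snrm_zero_eq]
  exact Real.sq_sqrt (tsum_nonneg fun ν => sq_nonneg _)

/-- componentwise bound by the `H_0`-norm -/
lemma abs_le_snrm0 (hx : sMem f 0 x) (ν : ℕ) : |x ν| ≤ snrm f 0 x := by
  rw [snrm_zero_eq, ← Real.sqrt_sq_eq_abs]
  refine Real.sqrt_le_sqrt ?_
  exact Summable.le_tsum (sMem_zero_iff.mp hx) ν (fun ν' _ => sq_nonneg _)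

lemma sMem.zero_of_one (hf : GoodWeight f) (hx : sMem f 1 x) : sMem f 0 x := by
  rw [sMem_zero_iff]
  refine Summable.of_nonneg_of_le (fun ν => sq_nonneg _) (fun ν => ?_)
    ((sMem_one_iff.mp hx).mul_left (f 0)⁻¹)
  have h0 := hf.1 0
  have hm : f 0 ≤ f ν := hf.2.1 (Nat.zero_le ν)
  have h1 : f 0 * x ν ^ 2 ≤ f ν * x ν ^ 2 :=
    mul_le_mul_of_nonneg_right hm (sq_nonneg _)
  calc x ν ^ 2 = (f 0)⁻¹ * (f 0 * x ν ^ 2) := by field_simp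
    _ ≤ (f 0)⁻¹ * (f ν * x ν ^ 2) := mul_le_mul_of_nonneg_left h1 (by positivity)

lemma snrm0_le (hf : GoodWeight f) (hx : sMem f 1 x) :
    snrm f 0 x ≤ Real.sqrt (f 0)⁻¹ * snrm f 1 x := by
  have h0 := hf.1 0
  have hle : (∑' ν, x ν ^ 2) ≤ (f 0)⁻¹ * ∑' ν, f ν * x ν ^ 2 := by
    rw [← tsum_mul_left]
    refine Summable.tsum_le_tsum (fun ν => ?_) (sMem_zero_iff.mp (hx.zero_of_one hf))
      (((sMem_one_iff.mp hx)).mul_left _)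
    have hm : f 0 ≤ f ν := hf.2.1 (Nat.zero_le ν)
    have h1 : f 0 * x ν ^ 2 ≤ f ν * x ν ^ 2 :=
      mul_le_mul_of_nonneg_right hm (sq_nonneg _)
    calc x ν ^ 2 = (f 0)⁻¹ * (f 0 * x ν ^ 2) := by field_simp
      _ ≤ (f 0)⁻¹ * (f ν * x ν ^ 2) := mul_le_mul_of_nonneg_left h1 (by positivity)
  rw [snrm_zero_eq, snrm_one_eq, ← Real.sqrt_mul (by positivity : (0:ℝ) ≤ (f 0)⁻¹)]
  exact Real.sqrt_le_sqrt hle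

end basics

/-- ε-δ criterion for `HasDerivAt` of real functions. -/
lemma hasDerivAt_of_forall_eps {g : ℝ → ℝ} {t y : ℝ}
    (h : ∀ ε > 0, ∃ δ > 0, ∀ r : ℝ, |r| < δ → |g (t + r) - g t - r * y| ≤ ε * |r|) :
    HasDerivAt g y t := by
  rw [hasDerivAt_iff_isLittleO, Asymptotics.isLittleO_iff]
  intro ε hε
  obtain ⟨δ, hδ, H⟩ := h ε hε
  have hev : ∀ᶠ u in nhds t, |u - t| < δ := by
    have : Metric.ball t δ ∈ nhds t := Metric.ball_mem_nhds t hδ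
    filter_upwards [this] with u hu
    simpa [Real.dist_eq] using hu
  filter_upwards [hev] with u hu
  have := H (u - t) hu
  simpa [Real.norm_eq_abs, smul_eq_mul, mul_comm] using this

/-- ε-δ criterion for continuity of real functions. -/
lemma continuousAt_of_forall_eps {g : ℝ → ℝ} {t : ℝ}
    (h : ∀ ε > 0, ∃ δ > 0, ∀ r : ℝ, |r - t| < δ → |g r - g t| < ε) : ContinuousAt g t := by
  rw [Metric.continuousAt_iff]
  simpa [Real.dist_eq] using h

/-- Cauchy–Schwarz for interval integrals. -/
lemma cs_integral {h : ℝ → ℝ} {a b : ℝ} (hab : a ≤ b)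
    (hc : ContinuousOn h (Icc a b)) :
    (∫ r in a..b, |h r|) ^ 2 ≤ (b - a) * ∫ r in a..b, h r ^ 2 := by
  have habs : ContinuousOn (fun r => |h r|) (Icc a b) := hc.abs
  have hsq : ContinuousOn (fun r => h r ^ 2) (Icc a b) := hc.pow 2
  have hIabs : IntervalIntegrable (fun r => |h r|) volume a b := by
    apply ContinuousOn.intervalIntegrable; rwa [uIcc_of_le hab]
  have hIsq : IntervalIntegrable (fun r => h r ^ 2) volume a b := by
    apply ContinuousOn.intervalIntegrable; rwa [uIcc_of_le hab]
  set A := ∫ r in a..b, |h r| with hA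
  set B := ∫ r in a..b, h r ^ 2 with hB
  set L := b - a with hL
  have hL0 : 0 ≤ L := by simp [hL]; linarith
  -- inner integral computation
  have inner_eq : ∀ t : ℝ, (∫ r in a..b, (|h r| - |h t|) ^ 2)
      = B - 2 * |h t| * A + L * h t ^ 2 := by
    intro t
    have : (fun r => (|h r| - |h t|) ^ 2)
        = fun r => h r ^ 2 - (2 * |h t|) * |h r| + h t ^ 2 := by
      funext r; rw [sub_sq, sq_abs, sq_abs]; ring
    rw [this]
    rw [intervalIntegral.integral_add ((hIsq.sub (hIabs.const_mul _))) intervalIntegrable_const,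
      intervalIntegral.integral_sub hIsq (hIabs.const_mul _),
      intervalIntegral.integral_const_mul, intervalIntegral.integral_const]
    simp [hA, hB, hL, smul_eq_mul]
    try ring
  have inner_nonneg : ∀ t : ℝ, 0 ≤ B - 2 * |h t| * A + L * h t ^ 2 := by
    intro t
    rw [← inner_eq t]
    exact intervalIntegral.integral_nonneg hab (fun r _ => sq_nonneg _)
  -- outer integral
  have houter : (∫ t in a..b, (B - 2 * |h t| * A + L * h t ^ 2)) = L * B - 2 * A * A + L * B := by
    have h1 : IntervalIntegrable (fun t => 2 * |h t| * A) volume a b := by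
      have := (hIabs.const_mul 2).mul_const A
      simpa [mul_assoc] using this
    have h2 : IntervalIntegrable (fun t => L * h t ^ 2) volume a b := hIsq.const_mul L
    rw [intervalIntegral.integral_add ((intervalIntegrable_const.sub h1)) h2,
      intervalIntegral.integral_sub intervalIntegrable_const h1,
      intervalIntegral.integral_const, intervalIntegral.integral_const_mul]
    have h3 : (∫ t in a..b, 2 * |h t| * A) = 2 * A * A := by
      have : (fun t => 2 * |h t| * A) = fun t => (2 * A) * |h t| := by funext t; ring
      rw [this, intervalIntegral.integral_const_mul, ← hA]
      try ring
    rw [h3]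
    simp [hL, smul_eq_mul]
    try ring
    exact Or.inl hB.symm
  have houter_nonneg : 0 ≤ L * B - 2 * A * A + L * B := by
    rw [← houter]
    exact intervalIntegral.integral_nonneg hab (fun t _ => inner_nonneg t)
  nlinarith


section main

variable {f ζ : ℕ → ℝ}

lemma gderiv (hf : GoodWeight f) (W : UVF (sMem f) (snrm f) (sF f ζ))
    (x Δ : ℕ → ℝ) (hx : sMem f 1 x) (hΔ : sMem f 1 Δ) (ν : ℕ) (t : ℝ) :
    HasDerivAt (fun t => W.V (x + t • Δ) ν) (W.DV (x + t • Δ) Δ ν) t := by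
  have hxt : sMem f 1 (x + t • Δ) := sMem.add hf hx (hΔ.smul t)
  apply hasDerivAt_of_forall_eps
  intro ε hε
  set D := snrm f 1 Δ with hD
  have hD0 : 0 ≤ D := snrm_nonneg
  obtain ⟨δ, hδ, hV⟩ := W.hasDeriv_V _ hxt (ε / (D + 1)) (by positivity)
  refine ⟨δ / (D + 1), by positivity, fun r hr => ?_⟩
  have hmem : sMem f 1 (r • Δ) := hΔ.smul r
  have hlt : snrm f 1 (r • Δ) < δ := by
    rw [snrm_smul]
    calc |r| * D ≤ |r| * (D + 1) := by nlinarith [abs_nonneg r]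
      _ < δ / (D + 1) * (D + 1) := by
          apply mul_lt_mul_of_pos_right hr; positivity
      _ = δ := by field_simp
  have hbound := hV (r • Δ) hmem hlt
  have haddm : sMem f 0
      (W.V (x + t • Δ + r • Δ) - W.V (x + t • Δ) - W.DV (x + t • Δ) (r • Δ)) :=
    sMem.sub hf (sMem.sub hf (W.mem_V_one _ (sMem.add hf hxt hmem))
      (W.mem_V_one _ hxt)) (W.mem_DV _ _ hxt hmem)
  have hcomp := (abs_le_snrm0 haddm ν).trans hbound
  have h1 : x + (t + r) • Δ = x + t • Δ + r • Δ := by rw [add_smul]; abel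
  have h2 : W.DV (x + t • Δ) (r • Δ) = r • W.DV (x + t • Δ) Δ := W.smul_DV _ r Δ hxt hΔ
  have hre : (W.V (x + t • Δ + r • Δ) - W.V (x + t • Δ) - W.DV (x + t • Δ) (r • Δ)) ν
      = W.V (x + (t + r) • Δ) ν - W.V (x + t • Δ) ν - r * W.DV (x + t • Δ) Δ ν := by
    simp [Pi.sub_apply, h2, Pi.smul_apply, smul_eq_mul, h1]
  rw [hre] at hcomp
  calc |W.V (x + (t + r) • Δ) ν - W.V (x + t • Δ) ν - r * W.DV (x + t • Δ) Δ ν|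
      ≤ ε / (D + 1) * (|r| * D) := by rwa [snrm_smul] at hcomp
    _ ≤ ε * |r| := by
        rw [div_mul_eq_mul_div, div_le_iff₀ (by positivity)]
        nlinarith [abs_nonneg r, hε.le]

lemma mvt (hf : GoodWeight f) (W : UVF (sMem f) (snrm f) (sF f ζ))
    (hid : ∀ x v, W.frame.Φ x v = v) (hidinv : ∀ x v, W.frame.Φinv x v = v)
    (x x' : ℕ → ℝ) (hx : sMem f 1 x) (hx' : sMem f 1 x') (ν : ℕ) :
    ∃ τ ∈ Ioo (0:ℝ) 1,
      W.V x' ν - W.V x ν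
        = ζ ν * Real.sqrt (f ν) * (x' ν - x ν)
          + W.P (x + τ • (x' - x)) (x' - x) ν := by
  set Δ := x' - x with hΔdef
  have hΔ : sMem f 1 Δ := sMem.sub hf hx' hx
  set g := fun t : ℝ => W.V (x + t • Δ) ν with hg
  set g' := fun t : ℝ => W.DV (x + t • Δ) Δ ν with hg'
  have hd : ∀ t, HasDerivAt g (g' t) t := fun t => gderiv hf W x Δ hx hΔ ν t
  have hc : ContinuousOn g (Icc 0 1) := fun t _ => ((hd t).continuousAt).continuousWithinAt
  obtain ⟨τ, hτ, heq⟩ := exists_hasDerivAt_eq_slope g g' one_pos hc (fun t _ => hd t)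
  refine ⟨τ, hτ, ?_⟩
  have hτ1 : sMem f 1 (x + τ • Δ) := sMem.add hf hx (hΔ.smul τ)
  have hPF : W.DV (x + τ • Δ) Δ = W.P (x + τ • Δ) Δ + sF f ζ Δ := by
    have h := W.extends_P (x + τ • Δ) Δ hτ1 hΔ
    rw [hid, hidinv] at h
    rw [h]; abel
  have hg1 : g 1 = W.V x' ν := by
    have : x + (1:ℝ) • Δ = x' := by rw [one_smul, hΔdef]; abel
    simp only [hg, this]
  have hg0 : g 0 = W.V x ν := by
    have : x + (0:ℝ) • Δ = x := by rw [zero_smul, add_zero]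
    simp only [hg, this]
  rw [hg1, hg0] at heq
  have heq' : W.DV (x + τ • Δ) Δ ν = W.V x' ν - W.V x ν := by
    have := heq
    simp only [hg'] at this
    rw [this]; ring
  have h2 : W.DV (x + τ • Δ) Δ ν
      = W.P (x + τ • Δ) Δ ν + ζ ν * Real.sqrt (f ν) * (x' ν - x ν) := by
    rw [hPF]
    have : Δ ν = x' ν - x ν := by rw [hΔdef]; rfl
    simp [sF, Pi.add_apply, this]
  rw [h2] at heq'
  linarith [heq']

set_option maxHeartbeats 1000000 in
lemma deriv_v (hf : GoodWeight f) (hζ : Signs ζ) (W : UVF (sMem f) (snrm f) (sF f ζ))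
    {c' : ℝ} (hel : W.ElementaryWith c') {T : ℝ} {w : ℝ → ℕ → ℝ}
    (hsol : IsGradSol (sMem f) (snrm f) W.V T w) {s : ℝ} (hs : s ∈ Ioo (-T) T) (ν : ℕ) :
    HasDerivAt (fun r => W.V (w r) ν)
      (ζ ν * Real.sqrt (f ν) * W.V (w s) ν + W.P (w s) (W.V (w s)) ν) s := by
  obtain ⟨hid, hidinv, -, hc'pos, hball, -⟩ := hel
  obtain ⟨hw1, hD, hv0⟩ := hsol
  have hws1 : sMem f 1 (w s) := hw1.1 s hs
  have hvs : sMem f 0 (W.V (w s)) := W.mem_V_one _ hws1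
  set lam := Real.sqrt (f ν) with hlam
  have hlam0 : 0 ≤ lam := Real.sqrt_nonneg _
  apply hasDerivAt_of_forall_eps
  intro ε hε
  set Cd := lam + c' + 1 with hCd
  have hCd0 : 0 < Cd := by positivity
  obtain ⟨δP, hδP, hP⟩ := W.cont_P (w s) (W.V (w s)) hws1 hvs (ε/3) (by positivity)
  obtain ⟨δD, hδD, hDq⟩ := hD s hs (ε/(3*Cd)) (by positivity)
  obtain ⟨δw, hδw, hwc⟩ := hw1.2 s hs δP hδP
  have hδI1 : (0:ℝ) < s + T := by linarith [hs.1]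
  have hδI2 : (0:ℝ) < T - s := by linarith [hs.2]
  refine ⟨min (min (s + T) (T - s)) (min δD δw), by positivity, fun r hr => ?_⟩
  rcases eq_or_ne r 0 with rfl | hr0
  · simp
  have hrI : |r| < min (s + T) (T - s) := lt_of_lt_of_le hr (min_le_left _ _)
  have hrD : |r| < δD := lt_of_lt_of_le hr ((min_le_right _ _).trans (min_le_left _ _))
  have hrw : |r| < δw := lt_of_lt_of_le hr ((min_le_right _ _).trans (min_le_right _ _))
  have hra := (abs_lt.mp (lt_of_lt_of_le hrI (min_le_left _ _))).1
  have hrb := (abs_lt.mp (lt_of_lt_of_le hrI (min_le_right _ _))).2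
  have hs' : s + r ∈ Ioo (-T) T := ⟨by linarith, by linarith⟩
  have hss : s + r - s = r := by ring
  have hws'1 : sMem f 1 (w (s + r)) := hw1.1 _ hs'
  have hΔ1 : sMem f 1 (w (s + r) - w s) := sMem.sub hf hws'1 hws1
  have hΔ0 : sMem f 0 (w (s + r) - w s) := hΔ1.zero_of_one hf
  obtain ⟨τ, hτ, hmvt⟩ := mvt hf W hid hidinv (w s) (w (s + r)) hws1 hws'1 ν
  set Δ := w (s + r) - w s with hΔdef
  set xτ := w s + τ • Δ with hxτdef
  have hxτ1 : sMem f 1 xτ := sMem.add hf hws1 (hΔ1.smul τ)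
  have hΔsmall : snrm f 1 Δ < δP := hwc (s + r) hs' (by rw [hss]; exact hrw)
  have hxτclose : snrm f 1 (xτ - w s) < δP := by
    have hxw : xτ - w s = τ • Δ := by rw [hxτdef]; abel
    rw [hxw, snrm_smul]
    calc |τ| * snrm f 1 Δ ≤ 1 * snrm f 1 Δ := by
          apply mul_le_mul_of_nonneg_right _ snrm_nonneg
          rw [abs_of_pos hτ.1]; exact hτ.2.le
      _ < δP := by rwa [one_mul]
  have hvv : snrm f 0 (W.V (w s) - W.V (w s)) < δP := by
    rw [sub_self, snrm_zero']; exact hδP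
  have hb2 : snrm f 0 (W.P xτ (W.V (w s)) - W.P (w s) (W.V (w s))) < ε/3 :=
    hP xτ (W.V (w s)) hxτ1 hvs hxτclose hvv
  set u := r⁻¹ • Δ with hudef
  have hu0 : sMem f 0 u := hΔ0.smul _
  have husub : sMem f 0 (u - W.V (w s)) := sMem.sub hf hu0 hvs
  have hqu : snrm f 0 (u - W.V (w s)) < ε/(3*Cd) := by
    have h := hDq (s + r) hs' (by intro hcon; exact hr0 (by linarith [hss, congrArg (fun z => z - s) hcon])) (by rw [hss]; exact hrD)
    rwa [hss] at h
  have hΔru : Δ = r • u := by rw [hudef, smul_smul, mul_inv_cancel₀ hr0, one_smul]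
  have hPu : W.P xτ Δ = r • W.P xτ u := by
    calc W.P xτ Δ = W.P xτ (r • u) := by rw [← hΔru]
      _ = r • W.P xτ u := W.smul_P xτ r u hxτ1 hu0
  have hPsplit : W.P xτ u = W.P xτ (u - W.V (w s)) + W.P xτ (W.V (w s)) := by
    have h := W.add_P xτ (u - W.V (w s)) (W.V (w s)) hxτ1 husub hvs
    rw [sub_add_cancel] at h
    exact h
  have hb1 : snrm f 0 (W.P xτ (u - W.V (w s))) ≤ c' * snrm f 0 (u - W.V (w s)) :=
    (hball xτ hxτ1).1 _ husub
  have hm1 : sMem f 0 (W.P xτ (u - W.V (w s))) := W.mem_P _ _ hxτ1 husub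
  have hm2 : sMem f 0 (W.P xτ (W.V (w s)) - W.P (w s) (W.V (w s))) :=
    sMem.sub hf (W.mem_P _ _ hxτ1 hvs) (W.mem_P _ _ hws1 hvs)
  have hζν : |ζ ν| = 1 := by rcases hζ ν with h | h <;> simp [h]
  -- algebraic identity
  have e1 : w (s + r) ν - w s ν = r * u ν := by
    have : Δ ν = r * u ν := by rw [hΔru]; rfl
    rw [← this, hΔdef]; rfl
  have e2 : W.P xτ Δ ν = r * W.P xτ u ν := by rw [hPu]; rfl
  have e3 : W.P xτ u ν = W.P xτ (u - W.V (w s)) ν + W.P xτ (W.V (w s)) ν := by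
    rw [hPsplit]; rfl

  have hE : W.V (w (s + r)) ν - W.V (w s) ν
      - r * (ζ ν * lam * W.V (w s) ν + W.P (w s) (W.V (w s)) ν)
      = r * (ζ ν * lam * ((u - W.V (w s)) ν)
          + (W.P xτ (u - W.V (w s)) ν
            + (W.P xτ (W.V (w s)) - W.P (w s) (W.V (w s))) ν)) := by
    rw [hmvt, e1, e2, e3]
    have h4 : (u - W.V (w s)) ν = u ν - W.V (w s) ν := rfl
    have h5 : (W.P xτ (W.V (w s)) - W.P (w s) (W.V (w s))) ν
        = W.P xτ (W.V (w s)) ν - W.P (w s) (W.V (w s)) ν := rfl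
    rw [h4, h5]; ring
  rw [hE, abs_mul]
  rw [mul_comm (ε) (|r|)]
  apply mul_le_mul_of_nonneg_left _ (abs_nonneg r)
  have k1 : |ζ ν * lam * ((u - W.V (w s)) ν)| ≤ lam * snrm f 0 (u - W.V (w s)) := by
    rw [abs_mul, abs_mul, hζν, one_mul, abs_of_nonneg hlam0]
    exact mul_le_mul_of_nonneg_left (abs_le_snrm0 husub ν) hlam0
  have k2 : |W.P xτ (u - W.V (w s)) ν| ≤ c' * snrm f 0 (u - W.V (w s)) :=
    (abs_le_snrm0 hm1 ν).trans hb1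
  have k3 : |(W.P xτ (W.V (w s)) - W.P (w s) (W.V (w s))) ν| ≤ ε/3 :=
    (abs_le_snrm0 hm2 ν).trans hb2.le
  have hq := hqu.le
  calc |ζ ν * lam * ((u - W.V (w s)) ν)
        + (W.P xτ (u - W.V (w s)) ν
          + (W.P xτ (W.V (w s)) - W.P (w s) (W.V (w s))) ν)|
      ≤ |ζ ν * lam * ((u - W.V (w s)) ν)|
        + (|W.P xτ (u - W.V (w s)) ν|
          + |(W.P xτ (W.V (w s)) - W.P (w s) (W.V (w s))) ν|) :=
        (abs_add_le _ _).trans (by gcongr; exact abs_add_le _ _)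
    _ ≤ lam * snrm f 0 (u - W.V (w s)) + (c' * snrm f 0 (u - W.V (w s)) + ε/3) := by
        gcongr
    _ ≤ ε := by
        have hsn : 0 ≤ snrm f 0 (u - W.V (w s)) := snrm_nonneg
        have h6 : (lam + c') * snrm f 0 (u - W.V (w s)) ≤ (lam + c') * (ε/(3*Cd)) := by
          apply mul_le_mul_of_nonneg_left hq (by positivity)
        have h7 : (lam + c') * (ε/(3*Cd)) ≤ ε/3 := by
          rw [hCd]
          have he : (lam + c') * (ε / (3 * (lam + c' + 1)))
              = ((lam + c') / (lam + c' + 1)) * (ε / 3) := by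
            field_simp
          rw [he]
          calc ((lam + c') / (lam + c' + 1)) * (ε / 3) ≤ 1 * (ε / 3) := by
                apply mul_le_mul_of_nonneg_right _ (by positivity)
                rw [div_le_one (by positivity)]; linarith
            _ = ε / 3 := one_mul _
        nlinarith [h6, h7]

lemma contH (hf : GoodWeight f) (W : UVF (sMem f) (snrm f) (sF f ζ))
    {T : ℝ} {w : ℝ → ℕ → ℝ}
    (hsol : IsGradSol (sMem f) (snrm f) W.V T w) {s : ℝ} (hs : s ∈ Ioo (-T) T) (ν : ℕ) :
    ContinuousAt (fun r => W.P (w r) (W.V (w r)) ν) s := by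
  obtain ⟨hw1, hD, hv0⟩ := hsol
  have hws1 : sMem f 1 (w s) := hw1.1 s hs
  have hvs : sMem f 0 (W.V (w s)) := W.mem_V_one _ hws1
  apply continuousAt_of_forall_eps
  intro ε hε
  obtain ⟨δP, hδP, hP⟩ := W.cont_P (w s) (W.V (w s)) hws1 hvs ε hε
  obtain ⟨δw, hδw, hwc⟩ := hw1.2 s hs δP hδP
  obtain ⟨δv, hδv, hvc⟩ := hv0.2 s hs δP hδP
  have hδI1 : (0:ℝ) < s + T := by linarith [hs.1]
  have hδI2 : (0:ℝ) < T - s := by linarith [hs.2]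
  refine ⟨min (min (s + T) (T - s)) (min δw δv), by positivity, fun r hr => ?_⟩
  have hrI := lt_of_lt_of_le hr (min_le_left _ _)
  have hrw : |r - s| < δw := lt_of_lt_of_le hr ((min_le_right _ _).trans (min_le_left _ _))
  have hrv : |r - s| < δv := lt_of_lt_of_le hr ((min_le_right _ _).trans (min_le_right _ _))
  have hra := (abs_lt.mp (lt_of_lt_of_le hrI (min_le_left _ _))).1
  have hrb := (abs_lt.mp (lt_of_lt_of_le hrI (min_le_right _ _))).2
  have hrmem : r ∈ Ioo (-T) T := ⟨by linarith, by linarith⟩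
  have hwr1 : sMem f 1 (w r) := hw1.1 r hrmem
  have hvr : sMem f 0 (W.V (w r)) := W.mem_V_one _ hwr1
  have hP0 := hP (w r) (W.V (w r)) hwr1 hvr (hwc r hrmem hrw) (hvc r hrmem hrv)
  have hmem : sMem f 0 (W.P (w r) (W.V (w r)) - W.P (w s) (W.V (w s))) :=
    sMem.sub hf (W.mem_P _ _ hwr1 hvr) (W.mem_P _ _ hws1 hvs)
  have := (abs_le_snrm0 hmem ν).trans_lt hP0
  simpa [Pi.sub_apply] using this

end main

section ode

/-- one-sided ODE bound, stable direction (anchor at the left endpoint) -/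
lemma ode_bound_left {φ h : ℝ → ℝ} {m p q : ℝ} (hm : m ≤ 0) (hpq : p ≤ q)
    (hd : ∀ r ∈ Icc p q, HasDerivAt φ (m * φ r + h r) r)
    (hch : ContinuousOn h (Icc p q)) :
    |φ q| ≤ |φ p| + ∫ r in p..q, |h r| := by
  have hE : ∀ r ∈ uIcc p q,
      HasDerivAt (fun r => Real.exp (-m * r) * φ r) (Real.exp (-m * r) * h r) r := by
    intro r hr
    rw [uIcc_of_le hpq] at hr
    have h1 : HasDerivAt (fun r : ℝ => Real.exp (-m * r)) (Real.exp (-m * r) * (-m * 1)) r :=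
      ((hasDerivAt_id r).const_mul (-m)).exp
    have h2 := (h1.mul (hd r hr))
    refine h2.congr_deriv ?_
    ring
  have hcont : ContinuousOn (fun r => Real.exp (-m * r) * h r) (Icc p q) :=
    (Real.continuous_exp.comp (continuous_const.mul continuous_id)).continuousOn.mul hch
  have hInt : IntervalIntegrable (fun r => Real.exp (-m * r) * h r) volume p q := by
    apply ContinuousOn.intervalIntegrable; rwa [uIcc_of_le hpq]
  have key := intervalIntegral.integral_eq_sub_of_hasDerivAt hE hInt
  have hIabs : IntervalIntegrable (fun r => |h r|) volume p q := by
    apply ContinuousOn.intervalIntegrable; rw [uIcc_of_le hpq]; exact hch.abs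
  have hIwt : IntervalIntegrable (fun r => Real.exp (m * q) * (Real.exp (-m * r) * |h r|))
      volume p q := by
    apply ContinuousOn.intervalIntegrable; rw [uIcc_of_le hpq]
    exact (continuous_const.continuousOn.mul
      ((Real.continuous_exp.comp (continuous_const.mul continuous_id)).continuousOn.mul hch.abs))
  -- |E q| ≤ |E p| + ∫ |exp(-m r) h r|
  have habs : Real.exp (-m * q) * |φ q|
      ≤ Real.exp (-m * p) * |φ p| + ∫ r in p..q, Real.exp (-m * r) * |h r| := by
    have hEq : Real.exp (-m * q) * φ q
        = Real.exp (-m * p) * φ p + ∫ r in p..q, Real.exp (-m * r) * h r := by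
      rw [key]; ring
    have h5 : |Real.exp (-m * q) * φ q|
        ≤ |Real.exp (-m * p) * φ p| + |∫ r in p..q, Real.exp (-m * r) * h r| := by
      rw [hEq]; exact abs_add_le _ _
    have h6 : |∫ r in p..q, Real.exp (-m * r) * h r|
        ≤ ∫ r in p..q, Real.exp (-m * r) * |h r| := by
      have := intervalIntegral.norm_integral_le_integral_norm
        (f := fun r => Real.exp (-m * r) * h r) (μ := volume) hpq
      simpa [Real.norm_eq_abs, abs_mul, abs_of_pos (Real.exp_pos _)] using this
    rw [abs_mul, abs_mul, abs_of_pos (Real.exp_pos _), abs_of_pos (Real.exp_pos _)] at h5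
    linarith
  -- multiply by exp (m q)
  have hmul := mul_le_mul_of_nonneg_left habs (Real.exp_pos (m * q)).le
  have hL : Real.exp (m * q) * (Real.exp (-m * q) * |φ q|) = |φ q| := by
    rw [← mul_assoc, ← Real.exp_add]; ring_nf; rw [Real.exp_zero, one_mul]
  rw [hL] at hmul
  have hR : Real.exp (m * q) * (Real.exp (-m * p) * |φ p|
        + ∫ r in p..q, Real.exp (-m * r) * |h r|)
      = Real.exp (m * q) * Real.exp (-m * p) * |φ p|
        + ∫ r in p..q, Real.exp (m * q) * (Real.exp (-m * r) * |h r|) := by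
    rw [mul_add, intervalIntegral.integral_const_mul, mul_assoc]
  rw [hR] at hmul
  have hone : Real.exp (m * q) * Real.exp (-m * p) ≤ 1 := by
    rw [← Real.exp_add, Real.exp_le_one_iff]
    nlinarith
  have hterm1 : Real.exp (m * q) * Real.exp (-m * p) * |φ p| ≤ |φ p| := by
    calc Real.exp (m * q) * Real.exp (-m * p) * |φ p| ≤ 1 * |φ p| :=
        mul_le_mul_of_nonneg_right hone (abs_nonneg _)
      _ = |φ p| := one_mul _
  have hterm2 : (∫ r in p..q, Real.exp (m * q) * (Real.exp (-m * r) * |h r|))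
      ≤ ∫ r in p..q, |h r| := by
    apply intervalIntegral.integral_mono_on hpq hIwt hIabs
    intro r hr
    have hone' : Real.exp (m * q) * Real.exp (-m * r) ≤ 1 := by
      rw [← Real.exp_add, Real.exp_le_one_iff]
      nlinarith [hr.2]
    calc Real.exp (m * q) * (Real.exp (-m * r) * |h r|)
        = Real.exp (m * q) * Real.exp (-m * r) * |h r| := by ring
      _ ≤ 1 * |h r| := mul_le_mul_of_nonneg_right hone' (abs_nonneg _)
      _ = |h r| := one_mul _
  linarith

/-- one-sided ODE bound, unstable direction (anchor at the right endpoint) -/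
lemma ode_bound_right {φ h : ℝ → ℝ} {m p q : ℝ} (hm : 0 ≤ m) (hpq : p ≤ q)
    (hd : ∀ r ∈ Icc p q, HasDerivAt φ (m * φ r + h r) r)
    (hch : ContinuousOn h (Icc p q)) :
    |φ p| ≤ |φ q| + ∫ r in p..q, |h r| := by
  have hE : ∀ r ∈ uIcc p q,
      HasDerivAt (fun r => Real.exp (-m * r) * φ r) (Real.exp (-m * r) * h r) r := by
    intro r hr
    rw [uIcc_of_le hpq] at hr
    have h1 : HasDerivAt (fun r : ℝ => Real.exp (-m * r)) (Real.exp (-m * r) * (-m * 1)) r :=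
      ((hasDerivAt_id r).const_mul (-m)).exp
    have h2 := (h1.mul (hd r hr))
    refine h2.congr_deriv ?_
    ring
  have hcont : ContinuousOn (fun r => Real.exp (-m * r) * h r) (Icc p q) :=
    (Real.continuous_exp.comp (continuous_const.mul continuous_id)).continuousOn.mul hch
  have hInt : IntervalIntegrable (fun r => Real.exp (-m * r) * h r) volume p q := by
    apply ContinuousOn.intervalIntegrable; rwa [uIcc_of_le hpq]
  have key := intervalIntegral.integral_eq_sub_of_hasDerivAt hE hInt
  have hIabs : IntervalIntegrable (fun r => |h r|) volume p q := by
    apply ContinuousOn.intervalIntegrable; rw [uIcc_of_le hpq]; exact hch.abs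
  have hIwt : IntervalIntegrable (fun r => Real.exp (m * p) * (Real.exp (-m * r) * |h r|))
      volume p q := by
    apply ContinuousOn.intervalIntegrable; rw [uIcc_of_le hpq]
    exact (continuous_const.continuousOn.mul
      ((Real.continuous_exp.comp (continuous_const.mul continuous_id)).continuousOn.mul hch.abs))
  have habs : Real.exp (-m * p) * |φ p|
      ≤ Real.exp (-m * q) * |φ q| + ∫ r in p..q, Real.exp (-m * r) * |h r| := by
    have hEq : Real.exp (-m * p) * φ p
        = Real.exp (-m * q) * φ q - ∫ r in p..q, Real.exp (-m * r) * h r := by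
      rw [key]; ring
    have h5 : |Real.exp (-m * p) * φ p|
        ≤ |Real.exp (-m * q) * φ q| + |∫ r in p..q, Real.exp (-m * r) * h r| := by
      rw [hEq, sub_eq_add_neg]
      exact (abs_add_le _ _).trans (by rw [abs_neg])
    have h6 : |∫ r in p..q, Real.exp (-m * r) * h r|
        ≤ ∫ r in p..q, Real.exp (-m * r) * |h r| := by
      have := intervalIntegral.norm_integral_le_integral_norm
        (f := fun r => Real.exp (-m * r) * h r) (μ := volume) hpq
      simpa [Real.norm_eq_abs, abs_mul, abs_of_pos (Real.exp_pos _)] using this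
    rw [abs_mul, abs_mul, abs_of_pos (Real.exp_pos _), abs_of_pos (Real.exp_pos _)] at h5
    linarith
  have hmul := mul_le_mul_of_nonneg_left habs (Real.exp_pos (m * p)).le
  have hL : Real.exp (m * p) * (Real.exp (-m * p) * |φ p|) = |φ p| := by
    rw [← mul_assoc, ← Real.exp_add]; ring_nf; rw [Real.exp_zero, one_mul]
  rw [hL] at hmul
  have hR : Real.exp (m * p) * (Real.exp (-m * q) * |φ q|
        + ∫ r in p..q, Real.exp (-m * r) * |h r|)
      = Real.exp (m * p) * Real.exp (-m * q) * |φ q|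
        + ∫ r in p..q, Real.exp (m * p) * (Real.exp (-m * r) * |h r|) := by
    rw [mul_add, intervalIntegral.integral_const_mul, mul_assoc]
  rw [hR] at hmul
  have hone : Real.exp (m * p) * Real.exp (-m * q) ≤ 1 := by
    rw [← Real.exp_add, Real.exp_le_one_iff]
    nlinarith
  have hterm1 : Real.exp (m * p) * Real.exp (-m * q) * |φ q| ≤ |φ q| := by
    calc Real.exp (m * p) * Real.exp (-m * q) * |φ q| ≤ 1 * |φ q| :=
        mul_le_mul_of_nonneg_right hone (abs_nonneg _)
      _ = |φ q| := one_mul _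
  have hterm2 : (∫ r in p..q, Real.exp (m * p) * (Real.exp (-m * r) * |h r|))
      ≤ ∫ r in p..q, |h r| := by
    apply intervalIntegral.integral_mono_on hpq hIwt hIabs
    intro r hr
    have hone' : Real.exp (m * p) * Real.exp (-m * r) ≤ 1 := by
      rw [← Real.exp_add, Real.exp_le_one_iff]
      nlinarith [hr.1]
    calc Real.exp (m * p) * (Real.exp (-m * r) * |h r|)
        = Real.exp (m * p) * Real.exp (-m * r) * |h r| := by ring
      _ ≤ 1 * |h r| := mul_le_mul_of_nonneg_right hone' (abs_nonneg _)
      _ = |h r| := one_mul _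
  linarith

end ode

section combine

variable {f ζ : ℕ → ℝ}

lemma duhamel (hf : GoodWeight f) (hζ : Signs ζ) (W : UVF (sMem f) (snrm f) (sF f ζ))
    {c' : ℝ} (hel : W.ElementaryWith c') {T : ℝ} {w : ℝ → ℕ → ℝ}
    (hsol : IsGradSol (sMem f) (snrm f) W.V T w)
    {a b s : ℝ} (ha : a ∈ Ioo (-T) T) (hb : b ∈ Ioo (-T) T)
    (has : a ≤ s) (hsb : s ≤ b) (ν : ℕ) :
    |W.V (w s) ν| ≤ |W.V (w a) ν| + |W.V (w b) ν|
      + ∫ r in a..b, |W.P (w r) (W.V (w r)) ν| := by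
  have hab : a ≤ b := has.trans hsb
  have hsubI : Icc a b ⊆ Ioo (-T) T :=
    fun r hr => ⟨lt_of_lt_of_le ha.1 hr.1, lt_of_le_of_lt hr.2 hb.2⟩
  have hch : ContinuousOn (fun r => W.P (w r) (W.V (w r)) ν) (Icc a b) :=
    fun r hr => (contH hf W hsol (hsubI hr) ν).continuousWithinAt
  have hd : ∀ r ∈ Icc a b, HasDerivAt (fun r => W.V (w r) ν)
      (ζ ν * Real.sqrt (f ν) * W.V (w r) ν + W.P (w r) (W.V (w r)) ν) r :=
    fun r hr => deriv_v hf hζ W hel hsol (hsubI hr) ν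
  have hIabs : IntervalIntegrable (fun r => |W.P (w r) (W.V (w r)) ν|) volume a b := by
    apply ContinuousOn.intervalIntegrable; rw [uIcc_of_le hab]; exact hch.abs
  have hnn : (0:ℝ → ℝ) ≤ᵐ[volume.restrict (Ioc a b)]
      fun r => |W.P (w r) (W.V (w r)) ν| :=
    Filter.Eventually.of_forall fun r => abs_nonneg _
  rcases hζ ν with h1 | h1
  · have hm : 0 ≤ ζ ν * Real.sqrt (f ν) := by
      rw [h1, one_mul]; exact Real.sqrt_nonneg _
    have hbd := ode_bound_right hm hsb
      (fun r hr => hd r ⟨has.trans hr.1, hr.2⟩)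
      (hch.mono (Icc_subset_Icc has le_rfl))
    have hext : (∫ r in s..b, |W.P (w r) (W.V (w r)) ν|)
        ≤ ∫ r in a..b, |W.P (w r) (W.V (w r)) ν| :=
      intervalIntegral.integral_mono_interval has hsb le_rfl hnn hIabs
    linarith [abs_nonneg (W.V (w a) ν)]
  · have hm : ζ ν * Real.sqrt (f ν) ≤ 0 := by
      rw [h1]
      have := Real.sqrt_nonneg (f ν); nlinarith
    have hbd := ode_bound_left hm has
      (fun r hr => hd r ⟨hr.1, hr.2.trans hsb⟩)
      (hch.mono (Icc_subset_Icc le_rfl hsb))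
    have hext : (∫ r in a..s, |W.P (w r) (W.V (w r)) ν|)
        ≤ ∫ r in a..b, |W.P (w r) (W.V (w r)) ν| :=
      intervalIntegral.integral_mono_interval le_rfl has hsb hnn hIabs
    linarith [abs_nonneg (W.V (w b) ν)]

lemma slice (f : ℕ → ℝ) {T κ α β : ℝ} (hαβ : α < β)
    (hsub : Ioo α β ⊆ Ioo (-T) T) {u : ℝ → ℕ → ℝ}
    (hL2 : eL2 f 0 (Ioo (-T) T) u ≤ ENNReal.ofReal (κ ^ 2)) :
    ∃ t ∈ Ioo α β, (snrm f 0 (u t)) ^ 2 ≤ (κ ^ 2 + 1) / (β - α) := by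
  by_contra hcon
  push_neg at hcon
  set M := (κ ^ 2 + 1) / (β - α) with hM
  have hβα : 0 < β - α := by linarith
  have hM0 : 0 ≤ M := by positivity
  have hmono : ENNReal.ofReal M * volume (Ioo α β) ≤ eL2 f 0 (Ioo (-T) T) u := by
    calc ENNReal.ofReal M * volume (Ioo α β)
        = ∫⁻ _ in Ioo α β, ENNReal.ofReal M := (setLIntegral_const _ _).symm
      _ ≤ ∫⁻ r in Ioo α β, ENNReal.ofReal ((snrm f 0 (u r)) ^ 2) := by
          apply lintegral_mono_ae
          exact (ae_restrict_iff' measurableSet_Ioo).mpr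
            (Filter.Eventually.of_forall fun r hr =>
              ENNReal.ofReal_le_ofReal (hcon r hr).le)
      _ ≤ ∫⁻ r in Ioo (-T) T, ENNReal.ofReal ((snrm f 0 (u r)) ^ 2) :=
          lintegral_mono' (Measure.restrict_mono hsub le_rfl) le_rfl
      _ = eL2 f 0 (Ioo (-T) T) u := rfl
  rw [Real.volume_Ioo] at hmono
  have hfin : ENNReal.ofReal (M * (β - α)) ≤ ENNReal.ofReal (κ ^ 2) := by
    rw [ENNReal.ofReal_mul hM0]; exact le_trans hmono hL2
  rw [ENNReal.ofReal_le_ofReal_iff (by positivity)] at hfin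
  have hMeq : M * (β - α) = κ ^ 2 + 1 := by
    rw [hM]; field_simp
  linarith

set_option maxHeartbeats 800000 in
lemma sum_H_sq_bound (hf : GoodWeight f) (W : UVF (sMem f) (snrm f) (sF f ζ))
    {c' : ℝ} (hel : W.ElementaryWith c') {T : ℝ} {w : ℝ → ℕ → ℝ}
    (hsol : IsGradSol (sMem f) (snrm f) W.V T w) {κ : ℝ}
    (hL2 : eL2 f 0 (Ioo (-T) T) (fun s => W.V (w s)) ≤ ENNReal.ofReal (κ ^ 2))
    {a b : ℝ} (ha : a ∈ Ioo (-T) T) (hb : b ∈ Ioo (-T) T) (hab : a ≤ b) (N : Finset ℕ) :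
    ∑ ν ∈ N, ∫ r in a..b, (W.P (w r) (W.V (w r)) ν) ^ 2 ≤ c' ^ 2 * κ ^ 2 := by
  obtain ⟨hid, hidinv, -, hc'pos, hball, -⟩ := hel
  have hsubI : Icc a b ⊆ Ioo (-T) T :=
    fun r hr => ⟨lt_of_lt_of_le ha.1 hr.1, lt_of_le_of_lt hr.2 hb.2⟩
  have hIoc : Ioc a b ⊆ Ioo (-T) T := fun r hr => hsubI ⟨hr.1.le, hr.2⟩
  have hch : ∀ ν : ℕ, ContinuousOn (fun r => (W.P (w r) (W.V (w r)) ν) ^ 2) (Icc a b) := by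
    intro ν
    have hbase : ContinuousOn (fun r => W.P (w r) (W.V (w r)) ν) (Icc a b) :=
      fun r hr => (contH hf W hsol (hsubI hr) ν).continuousWithinAt
    exact hbase.pow 2
  have hIsq : ∀ ν : ℕ, IntervalIntegrable (fun r => (W.P (w r) (W.V (w r)) ν) ^ 2)
      volume a b := by
    intro ν
    apply ContinuousOn.intervalIntegrable; rw [uIcc_of_le hab]; exact hch ν
  set G := fun r => ∑ ν ∈ N, (W.P (w r) (W.V (w r)) ν) ^ 2 with hG
  have hGcont : ContinuousOn G (Icc a b) := by
    apply continuousOn_finset_sum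
    intro ν _
    exact hch ν
  have hG0 : ∀ r, 0 ≤ G r := fun r => Finset.sum_nonneg fun ν _ => sq_nonneg _
  have hGbd : ∀ r ∈ Ioo (-T) T, G r ≤ c' ^ 2 * (snrm f 0 (W.V (w r))) ^ 2 := by
    intro r hr
    have hwr1 : sMem f 1 (w r) := hsol.1.1 r hr
    have hvr0 : sMem f 0 (W.V (w r)) := W.mem_V_one _ hwr1
    have hmemP : sMem f 0 (W.P (w r) (W.V (w r))) := W.mem_P _ _ hwr1 hvr0
    have h1 : G r ≤ ∑' ν, (W.P (w r) (W.V (w r)) ν) ^ 2 :=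
      Summable.sum_le_tsum N (fun i _ => sq_nonneg _) (sMem_zero_iff.mp hmemP)
    have h2 : (∑' ν, (W.P (w r) (W.V (w r)) ν) ^ 2)
        = (snrm f 0 (W.P (w r) (W.V (w r)))) ^ 2 := sq_snrm0.symm
    have h3 : snrm f 0 (W.P (w r) (W.V (w r))) ≤ c' * snrm f 0 (W.V (w r)) :=
      (hball (w r) hwr1).1 _ hvr0
    have h4 : (snrm f 0 (W.P (w r) (W.V (w r)))) ^ 2
        ≤ (c' * snrm f 0 (W.V (w r))) ^ 2 := by
      apply pow_le_pow_left₀ snrm_nonneg h3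
    calc G r ≤ (snrm f 0 (W.P (w r) (W.V (w r)))) ^ 2 := h2 ▸ h1
      _ ≤ (c' * snrm f 0 (W.V (w r))) ^ 2 := h4
      _ = c' ^ 2 * (snrm f 0 (W.V (w r))) ^ 2 := by ring
  have hGint : IntegrableOn G (Ioc a b) volume :=
    (hGcont.integrableOn_Icc).mono_set Ioc_subset_Icc_self
  have hofReal : ENNReal.ofReal (∫ r in Ioc a b, G r)
      = ∫⁻ r in Ioc a b, ENNReal.ofReal (G r) :=
    ofReal_integral_eq_lintegral_ofReal hGint
      (Filter.Eventually.of_forall fun r => hG0 r)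
  have hlin : (∫⁻ r in Ioc a b, ENNReal.ofReal (G r))
      ≤ ENNReal.ofReal (c' ^ 2) * ∫⁻ r in Ioc a b,
        ENNReal.ofReal ((snrm f 0 (W.V (w r))) ^ 2) := by
    rw [← lintegral_const_mul' _ _ ENNReal.ofReal_ne_top]
    apply lintegral_mono_ae
    apply (ae_restrict_iff' measurableSet_Ioc).mpr
    apply Filter.Eventually.of_forall
    intro r hr
    calc ENNReal.ofReal (G r) ≤ ENNReal.ofReal (c' ^ 2 * (snrm f 0 (W.V (w r))) ^ 2) :=
        ENNReal.ofReal_le_ofReal (hGbd r (hIoc hr))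
      _ = ENNReal.ofReal (c' ^ 2) * ENNReal.ofReal ((snrm f 0 (W.V (w r))) ^ 2) :=
        ENNReal.ofReal_mul (sq_nonneg _)
  have hlin2 : (∫⁻ r in Ioc a b, ENNReal.ofReal ((snrm f 0 (W.V (w r))) ^ 2))
      ≤ ENNReal.ofReal (κ ^ 2) := by
    refine le_trans ?_ hL2
    exact lintegral_mono' (Measure.restrict_mono hIoc le_rfl) le_rfl
  have hint_le : (∫ r in Ioc a b, G r) ≤ c' ^ 2 * κ ^ 2 := by
    rw [← ENNReal.ofReal_le_ofReal_iff (by positivity)]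
    calc ENNReal.ofReal (∫ r in Ioc a b, G r)
        = ∫⁻ r in Ioc a b, ENNReal.ofReal (G r) := hofReal
      _ ≤ ENNReal.ofReal (c' ^ 2) * ∫⁻ r in Ioc a b,
          ENNReal.ofReal ((snrm f 0 (W.V (w r))) ^ 2) := hlin
      _ ≤ ENNReal.ofReal (c' ^ 2) * ENNReal.ofReal (κ ^ 2) := by
          exact mul_le_mul_right hlin2 _
      _ = ENNReal.ofReal (c' ^ 2 * κ ^ 2) := (ENNReal.ofReal_mul (sq_nonneg _)).symm
  calc ∑ ν ∈ N, ∫ r in a..b, (W.P (w r) (W.V (w r)) ν) ^ 2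
      = ∫ r in a..b, G r := (intervalIntegral.integral_finset_sum fun ν _ => hIsq ν).symm
    _ = ∫ r in Ioc a b, G r := intervalIntegral.integral_of_le hab
    _ ≤ c' ^ 2 * κ ^ 2 := hint_le

end combine

set_option maxHeartbeats 2000000 in
/-- **Proposition 4.1.** Let `V` be an elementary unregularized vector field and `w` a
solution of `∂ₛ w = V(w)` on `I_T` with `‖∂ₛw‖_{L²(I_T,H_0)} ≤ κ`. Then for every
`0 < T' < T` there is a constant `c = c(κ,T')` with
`‖w‖_{C⁰(I_{T'},H_1) ∩ C¹(I_{T'},H_0)} ≤ c`. -/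
theorem elementary_C1_bound
    (f ζ : ℕ → ℝ) (hf : GoodWeight f) (hζ : Signs ζ)
    (W : UVF (sMem f) (snrm f) (sF f ζ)) (hW : W.Elementary)
    (T T' κ : ℝ) (hT' : 0 < T') (hT'T : T' < T) :
    ∃ c > 0, ∀ w : ℝ → ℕ → ℝ,
      IsGradSol (sMem f) (snrm f) W.V T w →
      eL2 f 0 (Ioo (-T) T) (fun s => W.V (w s)) ≤ ENNReal.ofReal (κ ^ 2) →
      ∀ s ∈ Ioo (-T') T',
        snrm f 1 (w s) ≤ c ∧ snrm f 0 (w s) ≤ c ∧ snrm f 0 (W.V (w s)) ≤ c := by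
  obtain ⟨c', hel⟩ := hW
  obtain ⟨hid, hidinv, hDzero, hc'pos, hball, h2lvl⟩ := id hel
  have hT : 0 < T := lt_trans hT' hT'T
  set M := (κ ^ 2 + 1) / (T - T') with hMdef
  have hM0 : 0 ≤ M := by
    have : (0:ℝ) < T - T' := by linarith
    positivity
  set B := 6 * M + 6 * T * (c' ^ 2 * κ ^ 2) with hBdef
  have hB0 : 0 ≤ B := by positivity
  set cV := Real.sqrt B with hcV
  have hcV0 : 0 ≤ cV := Real.sqrt_nonneg _
  set c1 := c' * (cV + 1) with hc1
  have hc10 : 0 ≤ c1 := by positivity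
  set c0 := Real.sqrt (f 0)⁻¹ * c1 with hc0
  have hc00 : 0 ≤ c0 := by positivity
  refine ⟨max cV (max c1 c0) + 1, by
    have := le_max_left cV (max c1 c0); linarith, ?_⟩
  intro w hsol hL2 s hs
  have hsubL : Ioo (-T) (-T') ⊆ Ioo (-T) T := fun r hr => ⟨hr.1, by
    have := hr.2; linarith [this]⟩
  have hsubR : Ioo T' T ⊆ Ioo (-T) T := fun r hr => ⟨by linarith [hr.1], hr.2⟩
  obtain ⟨a, haI, haM⟩ := slice f (by linarith : -T < -T') hsubL hL2
  obtain ⟨b, hbI, hbM⟩ := slice f hT'T hsubR hL2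
  have hMa : (snrm f 0 (W.V (w a))) ^ 2 ≤ M := by
    have he : (κ ^ 2 + 1) / ((-T') - (-T)) = M := by rw [hMdef]; ring_nf
    rw [← he]; exact haM
  have hMb : (snrm f 0 (W.V (w b))) ^ 2 ≤ M := by
    rw [hMdef]; exact hbM
  have haI' : a ∈ Ioo (-T) T := hsubL haI
  have hbI' : b ∈ Ioo (-T) T := hsubR hbI
  have has : a ≤ s := by have h1 := haI.2; have h2 := hs.1; linarith
  have hsb : s ≤ b := by have h1 := hbI.1; have h2 := hs.2; linarith
  have hab : a ≤ b := has.trans hsb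
  have hsI : s ∈ Ioo (-T) T := ⟨lt_of_lt_of_le haI'.1 has, lt_of_le_of_lt hsb hbI'.2⟩
  have hws1 : sMem f 1 (w s) := hsol.1.1 s hsI
  have hvs0 : sMem f 0 (W.V (w s)) := W.mem_V_one _ hws1
  have hva0 : sMem f 0 (W.V (w a)) := W.mem_V_one _ (hsol.1.1 a haI')
  have hvb0 : sMem f 0 (W.V (w b)) := W.mem_V_one _ (hsol.1.1 b hbI')
  have htsum : (∑' ν, (W.V (w s) ν) ^ 2) ≤ B := by
    apply Summable.tsum_le_of_sum_le (sMem_zero_iff.mp hvs0)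
    intro N
    have hJsum := sum_H_sq_bound hf W hel hsol hL2 haI' hbI' hab N
    have hper : ∀ ν ∈ N, (W.V (w s) ν) ^ 2
        ≤ 3 * (W.V (w a) ν) ^ 2 + 3 * (W.V (w b) ν) ^ 2
          + 6 * T * ∫ r in a..b, (W.P (w r) (W.V (w r)) ν) ^ 2 := by
      intro ν _
      have hd := duhamel hf hζ W hel hsol haI' hbI' has hsb ν
      set A := ∫ r in a..b, |W.P (w r) (W.V (w r)) ν| with hA
      have hA0 : 0 ≤ A := intervalIntegral.integral_nonneg hab (fun r _ => abs_nonneg _)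
      set J := ∫ r in a..b, (W.P (w r) (W.V (w r)) ν) ^ 2 with hJdef
      have hJ0 : 0 ≤ J := intervalIntegral.integral_nonneg hab (fun r _ => sq_nonneg _)
      have hsubI : Icc a b ⊆ Ioo (-T) T :=
        fun r hr => ⟨lt_of_lt_of_le haI'.1 hr.1, lt_of_le_of_lt hr.2 hbI'.2⟩
      have hchn : ContinuousOn (fun r => W.P (w r) (W.V (w r)) ν) (Icc a b) :=
        fun r hr => (contH hf W hsol (hsubI hr) ν).continuousWithinAt
      have hcs : A ^ 2 ≤ (b - a) * J := cs_integral hab hchn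
      have hba : b - a ≤ 2 * T := by
        have h1 := haI'.1; have h2 := hbI'.2; linarith
      have hcs2 : A ^ 2 ≤ 2 * T * J := le_trans hcs (by nlinarith)
      have h2 : (W.V (w s) ν) ^ 2 ≤ (|W.V (w a) ν| + |W.V (w b) ν| + A) ^ 2 := by
        rw [← sq_abs (W.V (w s) ν)]
        apply pow_le_pow_left₀ (abs_nonneg _) hd
      have h3 : (|W.V (w a) ν| + |W.V (w b) ν| + A) ^ 2
          ≤ 3 * ((W.V (w a) ν) ^ 2 + (W.V (w b) ν) ^ 2 + A ^ 2) := by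
        nlinarith [sq_abs (W.V (w a) ν), sq_abs (W.V (w b) ν),
          sq_nonneg (|W.V (w a) ν| - |W.V (w b) ν|),
          sq_nonneg (|W.V (w a) ν| - A), sq_nonneg (|W.V (w b) ν| - A)]
      nlinarith [h2, h3, hcs2]
    have hsa : (∑ ν ∈ N, (W.V (w a) ν) ^ 2) ≤ M := by
      calc (∑ ν ∈ N, (W.V (w a) ν) ^ 2) ≤ ∑' ν, (W.V (w a) ν) ^ 2 :=
          Summable.sum_le_tsum N (fun i _ => sq_nonneg _) (sMem_zero_iff.mp hva0)
        _ = (snrm f 0 (W.V (w a))) ^ 2 := sq_snrm0.symm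
        _ ≤ M := hMa
    have hsb' : (∑ ν ∈ N, (W.V (w b) ν) ^ 2) ≤ M := by
      calc (∑ ν ∈ N, (W.V (w b) ν) ^ 2) ≤ ∑' ν, (W.V (w b) ν) ^ 2 :=
          Summable.sum_le_tsum N (fun i _ => sq_nonneg _) (sMem_zero_iff.mp hvb0)
        _ = (snrm f 0 (W.V (w b))) ^ 2 := sq_snrm0.symm
        _ ≤ M := hMb
    calc ∑ ν ∈ N, (W.V (w s) ν) ^ 2
        ≤ ∑ ν ∈ N, (3 * (W.V (w a) ν) ^ 2 + 3 * (W.V (w b) ν) ^ 2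
            + 6 * T * ∫ r in a..b, (W.P (w r) (W.V (w r)) ν) ^ 2) :=
          Finset.sum_le_sum hper
      _ = 3 * (∑ ν ∈ N, (W.V (w a) ν) ^ 2) + 3 * (∑ ν ∈ N, (W.V (w b) ν) ^ 2)
            + 6 * T * (∑ ν ∈ N, ∫ r in a..b, (W.P (w r) (W.V (w r)) ν) ^ 2) := by
          rw [Finset.sum_add_distrib, Finset.sum_add_distrib,
            ← Finset.mul_sum, ← Finset.mul_sum, ← Finset.mul_sum]
      _ ≤ 3 * M + 3 * M + 6 * T * (c' ^ 2 * κ ^ 2) := by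
          have hT0 : (0:ℝ) ≤ 6 * T := by linarith
          have h6 : 6 * T * (∑ ν ∈ N, ∫ r in a..b, (W.P (w r) (W.V (w r)) ν) ^ 2)
              ≤ 6 * T * (c' ^ 2 * κ ^ 2) := mul_le_mul_of_nonneg_left hJsum hT0
          linarith
      _ = B := by rw [hBdef]; ring
  have hvbound : snrm f 0 (W.V (w s)) ≤ cV := by
    rw [snrm_zero_eq, hcV]
    exact Real.sqrt_le_sqrt htsum
  have h1bound : snrm f 1 (w s) ≤ c1 := by
    calc snrm f 1 (w s) ≤ c' * (snrm f 0 (W.V (w s)) + 1) := (hball (w s) hws1).2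
      _ ≤ c' * (cV + 1) := by
          apply mul_le_mul_of_nonneg_left (by linarith) hc'pos.le
  have h0bound : snrm f 0 (w s) ≤ c0 := by
    calc snrm f 0 (w s) ≤ Real.sqrt (f 0)⁻¹ * snrm f 1 (w s) := snrm0_le hf hws1
      _ ≤ Real.sqrt (f 0)⁻¹ * c1 := mul_le_mul_of_nonneg_left h1bound (Real.sqrt_nonneg _)
  refine ⟨?_, ?_, ?_⟩
  · have h := (le_max_left c1 c0).trans (le_max_right cV (max c1 c0))
    linarith
  · have h := (le_max_right c1 c0).trans (le_max_right cV (max c1 c0))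
    linarith
  · have h := le_max_left cV (max c1 c0)
    linarith


end NLGF
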